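/- Tensor-trick cohomology (δ₁-cohomology): let (H, Q) be a cochain complex of ℂ-vector spaces equipped with a Hodge–Kodaira decomposition QQ⁺ + Q⁺Q + P = 1, P² = P, QP = PQ = 0. On T(H) = ⊕_{n≥1} H^{⊗n} let δ₁ be the degree +1 derivation with δ₁(o_1⊗⋯⊗o_n) = Σ_{i=1}^n (−1)^{deg o_1+⋯+deg o_{i−1}} o_1⊗⋯⊗Q(o_i)⊗⋯⊗o_n, and define the degree −1 operator H* by H*(o_1⊗⋯⊗o_n) = Σ_{i=1}^n (−1)^{deg o_1+⋯+deg o_{i−1}} o_1⊗⋯⊗o_{i−1}⊗Q⁺(o_i)⊗P(o_{i+1})⊗⋯⊗P(o_n). Then δ₁ ∘ H* + H* ∘ δ₁ = Id − P^⊗, where P^⊗ restricted to H^{⊗n} is P⊗⋯⊗P; consequently the δ₁-cohomology of T(H) is ⊕_{n≥1} (H^p)^{⊗n} with H^p = PH. -/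

import Mathlib

namespace Kajiura

noncomputable section

variable {V : Type} [AddCommGroup V] [Module ℂ V]

/-- Koszul sign `(-1)^{d 0 + ⋯ + d (j-1)}`. -/
def sgn (d : ℕ → ℤ) (j : ℕ) : ℂ :=
  (-1 : ℂ) ^ (∑ i ∈ Finset.range j, d i)

/-- The `n`-th tensor power of `V`. -/
abbrev Tpow (V : Type) [AddCommGroup V] [Module ℂ V] (n : ℕ) : Type :=
  PiTensorProduct ℂ fun _ : Fin n => V

/-- The pure tensor `o_0 ⊗ ⋯ ⊗ o_{n-1}`. -/
def tp (n : ℕ) (o : ℕ → V) : Tpow V n :=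
  PiTensorProduct.tprod ℂ fun i : Fin n => o i.val

/-- One layer of the differential `δ₁` on a homogeneous pure tensor with degrees `d`:
`δ₁(o_1 ⊗ ⋯ ⊗ o_n) = Σ_i (-1)^{deg o_1 + ⋯ + deg o_{i-1}} o_1 ⊗ ⋯ ⊗ Q(o_i) ⊗ ⋯ ⊗ o_n`. -/
def delta1Layer (Q : V →ₗ[ℂ] V) (n : ℕ) (d : ℕ → ℤ) (o : ℕ → V) : Tpow V n :=
  ∑ i ∈ Finset.range n, sgn d i •
    (PiTensorProduct.tprod ℂ fun r : Fin n =>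
      if r.val = i then Q (o r.val) else o r.val)

/-- One layer of the homotopy `H*` on a homogeneous pure tensor with degrees `d`:
`H*(o_1 ⊗ ⋯ ⊗ o_n) = Σ_i (-1)^{deg o_1 + ⋯ + deg o_{i-1}}
  o_1 ⊗ ⋯ ⊗ o_{i-1} ⊗ Q⁺(o_i) ⊗ P(o_{i+1}) ⊗ ⋯ ⊗ P(o_n)`. -/
def hstarLayer (Qp P : V →ₗ[ℂ] V) (n : ℕ) (d : ℕ → ℤ) (o : ℕ → V) : Tpow V n :=
  ∑ i ∈ Finset.range n, sgn d i •
    (PiTensorProduct.tprod ℂ fun r : Fin n =>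
      if r.val < i then o r.val else if r.val = i then Qp (o r.val) else P (o r.val))

/-! ### Auxiliary material for the proof -/

lemma sgn_sub_of_le (d : ℕ → ℤ) {i j : ℕ} (h : i ≤ j) :
    sgn (fun r => if r = j then d r - 1 else d r) i = sgn d i := by
  unfold sgn
  congr 1
  refine Finset.sum_congr rfl fun r hr => ?_
  rw [Finset.mem_range] at hr
  show (if r = j then d r - 1 else d r) = d r
  rw [if_neg (by omega)]

lemma sgn_add_of_le (d : ℕ → ℤ) {i j : ℕ} (h : j ≤ i) :
    sgn (fun r => if r = i then d r + 1 else d r) j = sgn d j := by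
  unfold sgn
  congr 1
  refine Finset.sum_congr rfl fun r hr => ?_
  rw [Finset.mem_range] at hr
  show (if r = i then d r + 1 else d r) = d r
  rw [if_neg (by omega)]

lemma sgn_add_of_gt (d : ℕ → ℤ) {i j : ℕ} (h : i < j) :
    sgn (fun r => if r = i then d r + 1 else d r) j = -sgn d j := by
  unfold sgn
  have h1 : (∑ r ∈ Finset.range j, if r = i then d r + 1 else d r)
      = (∑ r ∈ Finset.range j, d r) + 1 := by
    have h2 : ∀ r ∈ Finset.range j,
        (if r = i then d r + 1 else d r) = d r + (if r = i then (1:ℤ) else 0) := by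
      intro r _; split_ifs <;> ring
    rw [Finset.sum_congr rfl h2, Finset.sum_add_distrib,
      Finset.sum_ite_eq' (Finset.range j) i fun _ => (1:ℤ)]
    simp [Finset.mem_range.mpr h]
  rw [h1, zpow_add₀ (by norm_num : (-1:ℂ) ≠ 0)]
  simp

lemma sgn_mul_self (d : ℕ → ℤ) (j : ℕ) : sgn d j * sgn d j = 1 := by
  unfold sgn; rw [← mul_zpow]; norm_num

/-- The factor function of a term of `δ₁ ∘ H*`: `Qp` at slot `j`, `P` after `j`,
and `Q` applied at slot `i`. -/
def f1 (Q Qp P : V →ₗ[ℂ] V) (o : ℕ → V) (n j i : ℕ) : Fin n → V := fun r =>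
  if r.val = i then
    Q (if r.val < j then o r.val else if r.val = j then Qp (o r.val) else P (o r.val))
  else
    if r.val < j then o r.val else if r.val = j then Qp (o r.val) else P (o r.val)

/-- The factor function of a term of `H* ∘ δ₁`: `Q` applied at slot `i`, then
`Qp` at slot `j` and `P` after `j`. -/
def f2 (Q Qp P : V →ₗ[ℂ] V) (o : ℕ → V) (n j i : ℕ) : Fin n → V := fun r =>
  if r.val < j then (if r.val = i then Q (o r.val) else o r.val)
  else if r.val = j then Qp (if r.val = i then Q (o r.val) else o r.val)
  else P (if r.val = i then Q (o r.val) else o r.val)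

/-- Partial `P`-tensor: `o` below `k`, `P o` from `k` on. -/
def Fk (P : V →ₗ[ℂ] V) (o : ℕ → V) (n k : ℕ) : Tpow V n :=
  PiTensorProduct.tprod ℂ fun r : Fin n => if r.val < k then o r.val else P (o r.val)

lemma Fk_top (P : V →ₗ[ℂ] V) (o : ℕ → V) (n : ℕ) : Fk P o n n = tp n o := by
  unfold Fk tp
  exact congrArg _ (funext fun r => by rw [if_pos r.isLt])

lemma Fk_zero (P : V →ₗ[ℂ] V) (o : ℕ → V) (n : ℕ) :
    Fk P o n 0 = tp n fun r => P (o r) := by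
  unfold Fk tp
  exact congrArg _ (funext fun r => by rw [if_neg (Nat.not_lt_zero _)])

lemma f1_eq_f2 (Q Qp P : V →ₗ[ℂ] V) (o : ℕ → V) (n : ℕ) {j i : ℕ} (h : i < j) :
    f1 Q Qp P o n j i = f2 Q Qp P o n j i := by
  funext r
  simp only [f1, f2]
  split_ifs <;> first | rfl | omega

lemma f1_zero (Q Qp P : V →ₗ[ℂ] V) (hQP : ∀ v, Q (P v) = 0) (o : ℕ → V)
    (n : ℕ) {j i : ℕ} (hi : i < n) (h : j < i) :
    (PiTensorProduct.tprod ℂ (f1 Q Qp P o n j i) : Tpow V n) = 0 := by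
  apply MultilinearMap.map_coord_zero _ (⟨i, hi⟩ : Fin n)
  show f1 Q Qp P o n j i ⟨i, hi⟩ = 0
  simp only [f1]
  simp only [if_true]
  rw [if_neg (by omega : ¬ i < j), if_neg (by omega : ¬ i = j)]
  exact hQP _

lemma f2_zero (Q Qp P : V →ₗ[ℂ] V) (hPQ : ∀ v, P (Q v) = 0) (o : ℕ → V)
    (n : ℕ) {j i : ℕ} (hi : i < n) (h : j < i) :
    (PiTensorProduct.tprod ℂ (f2 Q Qp P o n j i) : Tpow V n) = 0 := by
  apply MultilinearMap.map_coord_zero _ (⟨i, hi⟩ : Fin n)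
  show f2 Q Qp P o n j i ⟨i, hi⟩ = 0
  simp only [f2]
  simp only [if_true]
  rw [if_neg (by omega : ¬ i < j), if_neg (by omega : ¬ i = j)]
  exact hPQ _

lemma offdiag (Q Qp P : V →ₗ[ℂ] V) (hQP : ∀ v, Q (P v) = 0) (hPQ : ∀ v, P (Q v) = 0)
    (d : ℕ → ℤ) (o : ℕ → V) (n : ℕ) {j i : ℕ} (hi : i < n) (hij : i ≠ j) :
    (sgn d j * sgn (fun r => if r = j then d r - 1 else d r) i) •
        (PiTensorProduct.tprod ℂ (f1 Q Qp P o n j i) : Tpow V n)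
      + (sgn d i * sgn (fun r => if r = i then d r + 1 else d r) j) •
        (PiTensorProduct.tprod ℂ (f2 Q Qp P o n j i) : Tpow V n) = 0 := by
  rcases lt_or_gt_of_ne hij with h | h
  · rw [sgn_sub_of_le d h.le, sgn_add_of_gt d h, f1_eq_f2 Q Qp P o n h,
      mul_neg, neg_smul, mul_comm (sgn d i) (sgn d j)]
    exact add_neg_cancel _
  · rw [f1_zero Q Qp P hQP o n hi h, f2_zero Q Qp P hPQ o n hi h,
      smul_zero, smul_zero, add_zero]

lemma diag (Q Qp P : V →ₗ[ℂ] V) (hHK : ∀ v, Q (Qp v) + Qp (Q v) + P v = v)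
    (o : ℕ → V) (n j : ℕ) (hj : j < n) :
    (PiTensorProduct.tprod ℂ (f1 Q Qp P o n j j) : Tpow V n)
      + PiTensorProduct.tprod ℂ (f2 Q Qp P o n j j)
      = Fk P o n (j + 1) - Fk P o n j := by
  classical
  set m : Fin n → V := fun r => if r.val < j then o r.val else P (o r.val) with hm
  have h1 : f1 Q Qp P o n j j = Function.update m ⟨j, hj⟩ (Q (Qp (o j))) := by
    funext r
    rcases eq_or_ne r ⟨j, hj⟩ with h | h
    · subst h
      rw [Function.update_self]
      show (if j = j then Q (if j < j then o j else if j = j then Qp (o j) else P (o j))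
        else _) = Q (Qp (o j))
      rw [if_pos rfl, if_neg (lt_irrefl j), if_pos rfl]
    · have hv : (r : ℕ) ≠ j := fun hc => h (Fin.ext hc)
      rw [Function.update_of_ne h, hm]
      show (if (r : ℕ) = j then _ else _) = _
      rw [if_neg hv]
      show (if (r : ℕ) < j then o r.val else if (r : ℕ) = j then Qp (o r.val) else P (o r.val))
        = (if (r : ℕ) < j then o r.val else P (o r.val))
      split_ifs <;> first | rfl | omega
  have h2 : f2 Q Qp P o n j j = Function.update m ⟨j, hj⟩ (Qp (Q (o j))) := by
    funext r
    rcases eq_or_ne r ⟨j, hj⟩ with h | h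
    · subst h
      rw [Function.update_self]
      show (if j < j then _ else if j = j then Qp (if j = j then Q (o j) else o j) else _)
        = Qp (Q (o j))
      rw [if_neg (lt_irrefl j), if_pos rfl, if_pos rfl]
    · have hv : (r : ℕ) ≠ j := fun hc => h (Fin.ext hc)
      rw [Function.update_of_ne h, hm]
      show (if (r : ℕ) < j then (if (r : ℕ) = j then Q (o r.val) else o r.val)
          else if (r : ℕ) = j then Qp (if (r : ℕ) = j then Q (o r.val) else o r.val)
          else P (if (r : ℕ) = j then Q (o r.val) else o r.val))
        = (if (r : ℕ) < j then o r.val else P (o r.val))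
      split_ifs <;> first | rfl | omega
  have h3 : Function.update m ⟨j, hj⟩ (o j)
      = fun r : Fin n => if r.val < j + 1 then o r.val else P (o r.val) := by
    funext r
    rcases eq_or_ne r ⟨j, hj⟩ with h | h
    · subst h
      rw [Function.update_self]
      show o j = (if j < j + 1 then o j else P (o j))
      rw [if_pos (Nat.lt_succ_self j)]
    · have hv : (r : ℕ) ≠ j := fun hc => h (Fin.ext hc)
      rw [Function.update_of_ne h, hm]
      show (if (r : ℕ) < j then o r.val else P (o r.val))
        = (if (r : ℕ) < j + 1 then o r.val else P (o r.val))
      split_ifs <;> first | rfl | omega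
  have h4 : Function.update m ⟨j, hj⟩ (P (o j)) = m := by
    have : m ⟨j, hj⟩ = P (o j) := by
      rw [hm]
      show (if j < j then o j else P (o j)) = P (o j)
      rw [if_neg (lt_irrefl j)]
    rw [← this, Function.update_eq_self]
  have h5 : Q (Qp (o j)) + Qp (Q (o j)) = o j - P (o j) := eq_sub_of_add_eq (hHK (o j))
  rw [h1, h2, ← MultilinearMap.map_update_add, h5, MultilinearMap.map_update_sub, h3, h4]
  rfl

/-- Main theorem -/
theorem tensor_trick_cohomology
    (gr : ℤ → Submodule ℂ V) (hgr : DirectSum.IsInternal gr)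
    (Q Qp P : V →ₗ[ℂ] V)
    (hQdeg : ∀ (d : ℤ) (v : V), v ∈ gr d → Q v ∈ gr (d + 1))
    (hQpdeg : ∀ (d : ℤ) (v : V), v ∈ gr d → Qp v ∈ gr (d - 1))
    (hQ2 : ∀ v, Q (Q v) = 0)
    (hHK : ∀ v, Q (Qp v) + Qp (Q v) + P v = v)
    (hP2 : ∀ v, P (P v) = P v)
    (hQP : ∀ v, Q (P v) = 0)
    (hPQ : ∀ v, P (Q v) = 0) :
    ∀ (n : ℕ), 1 ≤ n → ∀ (d : ℕ → ℤ) (o : ℕ → V), (∀ i, i < n → o i ∈ gr (d i)) →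
      ((∑ j ∈ Finset.range n, sgn d j •
          delta1Layer Q n (fun r => if r = j then d r - 1 else d r)
            (fun r => if r < j then o r else if r = j then Qp (o r) else P (o r)))
        + ∑ i ∈ Finset.range n, sgn d i •
            hstarLayer Qp P n (fun r => if r = i then d r + 1 else d r)
              (fun r => if r = i then Q (o r) else o r))
      = tp n o - tp n fun r => P (o r) := by
  intro n hn d o ho
  classical
  have e1 : (∑ j ∈ Finset.range n, sgn d j •
          delta1Layer Q n (fun r => if r = j then d r - 1 else d r)
            (fun r => if r < j then o r else if r = j then Qp (o r) else P (o r)))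
      = ∑ j ∈ Finset.range n, ∑ i ∈ Finset.range n,
          (sgn d j * sgn (fun r => if r = j then d r - 1 else d r) i) •
            (PiTensorProduct.tprod ℂ (f1 Q Qp P o n j i) : Tpow V n) := by
    refine Finset.sum_congr rfl fun j _ => ?_
    simp only [delta1Layer, Finset.smul_sum, smul_smul]
    rfl
  have e2 : (∑ i ∈ Finset.range n, sgn d i •
            hstarLayer Qp P n (fun r => if r = i then d r + 1 else d r)
              (fun r => if r = i then Q (o r) else o r))
      = ∑ j ∈ Finset.range n, ∑ i ∈ Finset.range n,
          (sgn d i * sgn (fun r => if r = i then d r + 1 else d r) j) •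
            (PiTensorProduct.tprod ℂ (f2 Q Qp P o n j i) : Tpow V n) := by
    rw [Finset.sum_comm]
    refine Finset.sum_congr rfl fun i _ => ?_
    simp only [hstarLayer, Finset.smul_sum, smul_smul]
    rfl
  rw [e1, e2, ← Finset.sum_add_distrib, ← Fk_top P o n, ← Fk_zero P o n]
  refine (Finset.sum_congr rfl fun j hj => ?_).trans
    (Finset.sum_range_sub (fun k => Fk P o n k) n)
  rw [Finset.mem_range] at hj
  rw [← Finset.sum_add_distrib,
    Finset.sum_eq_single_of_mem j (Finset.mem_range.mpr hj)
      (fun i hi hij => offdiag Q Qp P hQP hPQ d o n (Finset.mem_range.mp hi) hij),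
    sgn_sub_of_le d (le_refl j), sgn_add_of_le d (le_refl j), sgn_mul_self,
    one_smul, one_smul]
  exact diag Q Qp P hHK o n j hj

end
end Kajiura
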